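/- If a Borel probability measure μ on ℝ^d is (2^{−m}, s, m^{−2})-robust for all integers m ≥ m₀, then every Borel set X with μ(X) > 0 has positive s-dimensional Hausdorff measure, and hence Hausdorff dimension at least s. -/

import Mathlib

open MeasureTheory Metric Set Filter
open scoped ENNReal Topology

/-- The dyadic cube of side `2^{-m}` indexed by `k : Fin d → ℤ`. -/
def dyadicCube (d m : ℕ) (k : Fin d → ℤ) : Set (EuclideanSpace ℝ (Fin d)) :=
  {x | ∀ i, (k i : ℝ) * (2:ℝ) ^ (-(m:ℝ)) ≤ x i ∧ x i < ((k i : ℝ) + 1) * (2:ℝ) ^ (-(m:ℝ))}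

/-- The number (in `ℕ∞`) of dyadic cubes of side `2^{-m}` intersecting `X`. -/
noncomputable def cubeCount (d m : ℕ) (X : Set (EuclideanSpace ℝ (Fin d))) : ℕ∞ :=
  {k : Fin d → ℤ | (dyadicCube d m k ∩ X).Nonempty}.encard

/-- `μ` is `(2^{-m}, s, r)`-robust: any Borel set of measure `> r` meets more than
`(2^{-m})^{-s} = 2^{ms}` dyadic cubes of side `2^{-m}`. -/
def IsRobust (d : ℕ) (μ : Measure (EuclideanSpace ℝ (Fin d))) (m : ℕ) (s r : ℝ) : Prop :=
  ∀ X : Set (EuclideanSpace ℝ (Fin d)), MeasurableSet X → ENNReal.ofReal r < μ X →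
    ENNReal.ofReal ((2:ℝ) ^ ((m:ℝ) * s)) < (cubeCount d m X : ℝ≥0∞)

namespace RobustAux

lemma rpow_neg_eq (m : ℕ) : (2:ℝ) ^ (-(m:ℝ)) = ((2:ℝ) ^ m)⁻¹ := by
  rw [Real.rpow_neg (by norm_num), Real.rpow_natCast]

lemma mem_dyadicCube_iff {d m : ℕ} {k : Fin d → ℤ} {x : EuclideanSpace ℝ (Fin d)} :
    x ∈ dyadicCube d m k ↔ ∀ i, ⌊x i * (2:ℝ) ^ m⌋ = k i := by
  have h2 : (0:ℝ) < 2 ^ m := by positivity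
  have key : ∀ i : Fin d,
      ((k i : ℝ) * (2:ℝ) ^ (-(m:ℝ)) ≤ x i ∧ x i < ((k i : ℝ) + 1) * (2:ℝ) ^ (-(m:ℝ))) ↔
      ((k i : ℝ) ≤ x i * 2 ^ m ∧ x i * 2 ^ m < (k i : ℝ) + 1) := by
    intro i
    rw [rpow_neg_eq, mul_inv_le_iff₀ h2, lt_mul_inv_iff₀ h2]
  constructor
  · intro h i
    rw [Int.floor_eq_iff]
    exact (key i).mp (h i)
  · intro h i
    exact (key i).mpr (Int.floor_eq_iff.mp (h i))

lemma mem_dyadicCube_floor {d m : ℕ} (x : EuclideanSpace ℝ (Fin d)) :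
    x ∈ dyadicCube d m (fun i => ⌊x i * (2:ℝ) ^ m⌋) :=
  mem_dyadicCube_iff.mpr fun _ => rfl

lemma dyadicCube_eq_of_mem {d m : ℕ} {k k' : Fin d → ℤ} {x : EuclideanSpace ℝ (Fin d)}
    (h : x ∈ dyadicCube d m k) (h' : x ∈ dyadicCube d m k') : k = k' := by
  funext i
  rw [← mem_dyadicCube_iff.mp h i, ← mem_dyadicCube_iff.mp h' i]

lemma measurableSet_dyadicCube {d m : ℕ} (k : Fin d → ℤ) :
    MeasurableSet (dyadicCube d m k) := by
  have : dyadicCube d m k = ⋂ i, (fun x : EuclideanSpace ℝ (Fin d) => x i) ⁻¹'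
      (Set.Ico ((k i : ℝ) * (2:ℝ) ^ (-(m:ℝ))) (((k i : ℝ) + 1) * (2:ℝ) ^ (-(m:ℝ)))) := by
    ext x; simp [dyadicCube, Set.mem_iInter, Set.mem_Ico]
  rw [this]
  exact MeasurableSet.iInter fun i =>
    ((EuclideanSpace.proj i : EuclideanSpace ℝ (Fin d) →L[ℝ] ℝ).continuous.measurable)
      measurableSet_Ico

lemma dist_coord_le {d : ℕ} (x y : EuclideanSpace ℝ (Fin d)) (i : Fin d) :
    dist (x i) (y i) ≤ dist x y := by
  rw [EuclideanSpace.dist_eq]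
  have h1 : dist (x i) (y i) = Real.sqrt (dist (x i) (y i) ^ 2) := by
    rw [Real.sqrt_sq dist_nonneg]
  rw [h1]
  apply Real.sqrt_le_sqrt
  exact Finset.single_le_sum (f := fun j => dist (x j) (y j) ^ 2)
    (fun j _ => by positivity) (Finset.mem_univ i)

lemma encard_toENNReal_iUnion_le {d : ℕ} (A : ℕ → Set (Fin d → ℤ)) :
    (((⋃ n, A n).encard : ℕ∞) : ℝ≥0∞) ≤ ∑' n, (((A n).encard : ℕ∞) : ℝ≥0∞) := by
  have hcnt : ∀ s : Set (Fin d → ℤ), Measure.count s = ((s.encard : ℕ∞) : ℝ≥0∞) := by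
    intro s
    rcases s.finite_or_infinite with hf | hi
    · rw [Measure.count_apply_finite s hf, hf.encard_eq_coe_toFinset_card]
      simp
    · rw [Measure.count_apply_infinite hi, hi.encard_eq]
      simp
  rw [← hcnt]
  calc Measure.count (⋃ n, A n) ≤ ∑' n, Measure.count (A n) := measure_iUnion_le A
    _ = ∑' n, ((A n).encard : ℝ≥0∞) := by simp only [hcnt]

lemma encard_hit_le {d m : ℕ} {t : Set (EuclideanSpace ℝ (Fin d))}
    (h : EMetric.diam t ≤ ENNReal.ofReal ((2:ℝ) ^ (-(m:ℝ)))) :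
    (({k : Fin d → ℤ | (dyadicCube d m k ∩ t).Nonempty}.encard : ℕ∞) : ℝ≥0∞)
      ≤ (3:ℝ≥0∞) ^ d := by
  rcases t.eq_empty_or_nonempty with rfl | ⟨x₀, hx₀⟩
  · simp
  set a : Fin d → ℤ := fun i => ⌊x₀ i * (2:ℝ) ^ m⌋ with ha
  have hsub : {k : Fin d → ℤ | (dyadicCube d m k ∩ t).Nonempty} ⊆
      ↑(Fintype.piFinset fun i => Finset.Icc (a i - 1) (a i + 1)) := by
    rintro k ⟨x, hxk, hxt⟩
    simp only [Finset.mem_coe, Fintype.mem_piFinset, Finset.mem_Icc]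
    intro i
    have hk : ⌊x i * (2:ℝ) ^ m⌋ = k i := mem_dyadicCube_iff.mp hxk i
    have h2 : (0:ℝ) < 2 ^ m := by positivity
    have hd : dist (x i) (x₀ i) ≤ (2:ℝ) ^ (-(m:ℝ)) := by
      have h1 : edist x x₀ ≤ ENNReal.ofReal ((2:ℝ) ^ (-(m:ℝ))) :=
        le_trans (EMetric.edist_le_diam_of_mem hxt hx₀) h
      have := (edist_le_ofReal (r := (2:ℝ) ^ (-(m:ℝ))) (by positivity)).mp h1
      exact le_trans (dist_coord_le x x₀ i) this
    have hdist : |x i * 2 ^ m - x₀ i * 2 ^ m| ≤ 1 := by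
      have hmul : |x i - x₀ i| * 2 ^ m ≤ (2:ℝ) ^ (-(m:ℝ)) * 2 ^ m :=
        mul_le_mul_of_nonneg_right (by rwa [Real.dist_eq] at hd) h2.le
      have h3 : (2:ℝ) ^ (-(m:ℝ)) * 2 ^ m = 1 := by
        rw [rpow_neg_eq]
        field_simp
      calc |x i * 2 ^ m - x₀ i * 2 ^ m| = |(x i - x₀ i) * 2 ^ m| := by ring_nf
        _ = |x i - x₀ i| * 2 ^ m := by rw [abs_mul, abs_of_pos h2]
        _ ≤ 1 := by rw [h3] at hmul; exact hmul
    have hlow := abs_le.mp hdist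
    have hfl : (a i : ℝ) ≤ x₀ i * (2:ℝ) ^ m := Int.floor_le _
    constructor
    · rw [← hk]
      apply Int.le_floor.mpr
      push_cast
      linarith [hlow.1]
    · rw [← hk]
      have h4 : x i * 2 ^ m ≤ x₀ i * 2 ^ m + 1 := by linarith [hlow.2]
      calc ⌊x i * (2:ℝ) ^ m⌋ ≤ ⌊x₀ i * (2:ℝ) ^ m + 1⌋ := Int.floor_le_floor h4
        _ = a i + 1 := by rw [Int.floor_add_one]
  have hcard : (Fintype.piFinset fun i : Fin d => Finset.Icc (a i - 1) (a i + 1)).card = 3 ^ d := by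
    rw [Fintype.card_piFinset]
    have h3 : ∀ i : Fin d, (Finset.Icc (a i - 1) (a i + 1)).card = 3 := by
      intro i
      rw [Int.card_Icc]
      have : a i + 1 + 1 - (a i - 1) = 3 := by ring
      rw [this]
      rfl
    simp only [h3, Finset.prod_const, Finset.card_univ, Fintype.card_fin]
  calc (({k : Fin d → ℤ | (dyadicCube d m k ∩ t).Nonempty}.encard : ℕ∞) : ℝ≥0∞)
      ≤ ((((Fintype.piFinset fun i => Finset.Icc (a i - 1) (a i + 1)) : Finset (Fin d → ℤ)) :
          Set (Fin d → ℤ)).encard : ℝ≥0∞) := ENat.toENNReal_mono (Set.encard_mono hsub)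
    _ = (3:ℝ≥0∞) ^ d := by
        rw [Set.encard_coe_eq_coe_finsetCard, hcard]
        push_cast
        norm_num

lemma T_eq (x : ℝ) : ENNReal.ofReal ((2:ℝ) ^ x) = (2:ℝ≥0∞) ^ x := by
  rw [← ENNReal.ofReal_rpow_of_pos (by norm_num : (0:ℝ) < 2)]
  norm_num

lemma cover_extract {E : Type*} [EMetricSpace E] [MeasurableSpace E] [BorelSpace E]
    {s : ℝ} {X : Set E} (h0 : μH[s] X = 0) (r ε : ℝ≥0∞) (hr : 0 < r) (hε : 0 < ε) :
    ∃ t : ℕ → Set E, X ⊆ ⋃ n, t n ∧ (∀ n, EMetric.diam (t n) ≤ r) ∧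
      ∑' n, ⨆ _ : (t n).Nonempty, EMetric.diam (t n) ^ s < ε := by
  rw [Measure.hausdorffMeasure_apply] at h0
  have h1 : (⨅ (t : ℕ → Set E) (_ : X ⊆ ⋃ n, t n) (_ : ∀ n, EMetric.diam (t n) ≤ r),
      ∑' n, ⨆ _ : (t n).Nonempty, EMetric.diam (t n) ^ s) = 0 := by
    refine le_antisymm ?_ zero_le
    rw [← h0]
    exact le_iSup₂ (f := fun (r : ℝ≥0∞) (_ : 0 < r) =>
      ⨅ (t : ℕ → Set E) (_ : X ⊆ ⋃ n, t n) (_ : ∀ n, EMetric.diam (t n) ≤ r),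
        ∑' n, ⨆ _ : (t n).Nonempty, EMetric.diam (t n) ^ s) r hr
  have h2 : (⨅ (t : ℕ → Set E) (_ : X ⊆ ⋃ n, t n) (_ : ∀ n, EMetric.diam (t n) ≤ r),
      ∑' n, ⨆ _ : (t n).Nonempty, EMetric.diam (t n) ^ s) < ε := h1 ▸ hε
  obtain ⟨t, ht⟩ := iInf_lt_iff.mp h2
  obtain ⟨hc, ht⟩ := iInf_lt_iff.mp ht
  obtain ⟨hd, ht⟩ := iInf_lt_iff.mp ht
  exact ⟨t, hc, hd, ht⟩

lemma delta_anti {m m' : ℕ} (h : m ≤ m') :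
    ENNReal.ofReal ((2:ℝ) ^ (-(m':ℝ))) ≤ ENNReal.ofReal ((2:ℝ) ^ (-(m:ℝ))) :=
  ENNReal.ofReal_le_ofReal (Real.rpow_le_rpow_of_exponent_le one_le_two
    (by have : (m:ℝ) ≤ (m':ℝ) := Nat.cast_le.mpr h; linarith))

lemma exists_scale {E : Type*} [EMetricSpace E] (t : ℕ → Set E) (M : ℕ)
    (hdiam : ∀ n, EMetric.diam (t n) ≤ ENNReal.ofReal ((2:ℝ) ^ (-(M:ℝ)))) :
    ∃ mf : ℕ → ℕ, (∀ n, M ≤ mf n) ∧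
      (∀ n, EMetric.diam (t n) ≤ ENNReal.ofReal ((2:ℝ) ^ (-(mf n:ℝ)))) ∧
      (∀ n, EMetric.diam (t n) ≠ 0 →
        ENNReal.ofReal ((2:ℝ) ^ (-((mf n : ℝ) + 1))) < EMetric.diam (t n)) ∧
      (∀ n, EMetric.diam (t n) = 0 → mf n = M + n + 1) := by
  classical
  refine ⟨fun n => if h : ∃ m : ℕ, ¬(EMetric.diam (t n) ≤ ENNReal.ofReal ((2:ℝ) ^ (-(m:ℝ))))
    then Nat.find h - 1 else M + n + 1, ?_, ?_, ?_, ?_⟩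
  · intro n
    by_cases h : ∃ m : ℕ, ¬(EMetric.diam (t n) ≤ ENNReal.ofReal ((2:ℝ) ^ (-(m:ℝ))))
    · simp only [dif_pos h]
      have hMlt : M < Nat.find h := by
        rw [Nat.lt_find_iff]
        intro m hm hp
        exact hp (le_trans (hdiam n) (delta_anti hm))
      omega
    · simp only [dif_neg h]; omega
  · intro n
    by_cases h : ∃ m : ℕ, ¬(EMetric.diam (t n) ≤ ENNReal.ofReal ((2:ℝ) ^ (-(m:ℝ))))
    · simp only [dif_pos h]
      have hMlt : M < Nat.find h := by
        rw [Nat.lt_find_iff]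
        intro m hm hp
        exact hp (le_trans (hdiam n) (delta_anti hm))
      have := Nat.find_min h (m := Nat.find h - 1) (by omega)
      exact not_not.mp this
    · simp only [dif_neg h]
      push_neg at h
      exact h _
  · intro n hne
    have h : ∃ m : ℕ, ¬(EMetric.diam (t n) ≤ ENNReal.ofReal ((2:ℝ) ^ (-(m:ℝ)))) := by
      obtain ⟨j, hj⟩ := ENNReal.exists_inv_two_pow_lt hne
      refine ⟨j, not_le.mpr ?_⟩
      calc ENNReal.ofReal ((2:ℝ) ^ (-(j:ℝ))) = (2:ℝ≥0∞) ^ (-(j:ℝ)) := T_eq _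
        _ = 2⁻¹ ^ j := by
            rw [ENNReal.rpow_neg, ENNReal.rpow_natCast, ENNReal.inv_pow]
        _ < EMetric.diam (t n) := hj
    simp only [dif_pos h]
    have hMlt : M < Nat.find h := by
      rw [Nat.lt_find_iff]
      intro m hm hp
      exact hp (le_trans (hdiam n) (delta_anti hm))
    have hspec := Nat.find_spec h
    rw [not_le] at hspec
    have heq : ((Nat.find h - 1 : ℕ) : ℝ) + 1 = (Nat.find h : ℝ) := by
      have : Nat.find h - 1 + 1 = Nat.find h := by omega
      exact_mod_cast congrArg (Nat.cast (R := ℝ)) this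
    rw [heq]
    exact hspec
  · intro n hz
    have h : ¬∃ m : ℕ, ¬(EMetric.diam (t n) ≤ ENNReal.ofReal ((2:ℝ) ^ (-(m:ℝ)))) := by
      push_neg
      intro m
      rw [hz]
      exact zero_le
    simp only [dif_neg h]

lemma tail_small {c : ℝ≥0∞} (hc : 0 < c) (hct : c ≠ ⊤) :
    ∀ᶠ M : ℕ in atTop, ∑' j : ℕ, ENNReal.ofReal ((((j + M : ℕ):ℝ)^2)⁻¹) < c := by
  set f : ℕ → ℝ := fun n => (((n:ℕ):ℝ)^2)⁻¹ with hf
  have hsum : Summable f := by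
    have := (Real.summable_one_div_nat_pow (p := 2)).mpr one_lt_two
    simp only [hf, one_div] at this ⊢; exact this
  have htendsto : Tendsto (fun M => ∑' k, f (k + M)) atTop (𝓝 0) := tendsto_sum_nat_add f
  have ev : ∀ᶠ M in atTop, ∑' k, f (k + M) < c.toReal :=
    htendsto.eventually (gt_mem_nhds (ENNReal.toReal_pos hc.ne' hct))
  filter_upwards [ev] with M hM
  have hs : Summable fun j => f (j + M) := (summable_nat_add_iff M).mpr hsum
  have h1 : ∑' j : ℕ, ENNReal.ofReal (f (j + M)) = ENNReal.ofReal (∑' j, f (j + M)) :=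
    (ENNReal.ofReal_tsum_of_nonneg (fun _ => by positivity) hs).symm
  calc ∑' j : ℕ, ENNReal.ofReal ((((j + M : ℕ):ℝ)^2)⁻¹) = ENNReal.ofReal (∑' j, f (j + M)) := h1
    _ < c := by
        rw [ENNReal.ofReal_lt_iff_lt_toReal (tsum_nonneg fun _ => by positivity) hct]
        exact hM

lemma main_count_bound {d : ℕ} {s : ℝ} (hs : 0 < s) {M m : ℕ} (hm : M ≤ m)
    (hE4 : (3:ℝ≥0∞)^d * 2 ≤ (2:ℝ≥0∞) ^ ((M:ℝ)*s))
    {e : ℝ≥0∞} (he : e ≤ (2:ℝ≥0∞) ^ (-1-s) * ((3:ℝ≥0∞)^d)⁻¹) :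
    (3:ℝ≥0∞)^d * ((2:ℝ≥0∞) ^ (((m:ℝ)+1)*s) * e + 1) ≤ (2:ℝ≥0∞) ^ ((m:ℝ)*s) := by
  have h2ne : (2:ℝ≥0∞) ≠ 0 := by norm_num
  have h2top : (2:ℝ≥0∞) ≠ ⊤ := by norm_num
  have hC0 : ((3:ℝ≥0∞)^d) ≠ 0 := pow_ne_zero d (by norm_num)
  have hCt : ((3:ℝ≥0∞)^d) ≠ ⊤ := ENNReal.pow_ne_top (by norm_num)
  have key1 : (3:ℝ≥0∞)^d * ((2:ℝ≥0∞)^(((m:ℝ)+1)*s) * e) ≤ (2:ℝ≥0∞)^((m:ℝ)*s - 1) := by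
    calc (3:ℝ≥0∞)^d * ((2:ℝ≥0∞)^(((m:ℝ)+1)*s) * e)
        ≤ (3:ℝ≥0∞)^d * ((2:ℝ≥0∞)^(((m:ℝ)+1)*s) * ((2:ℝ≥0∞)^(-1-s) * ((3:ℝ≥0∞)^d)⁻¹)) := by
          gcongr
      _ = ((3:ℝ≥0∞)^d * ((3:ℝ≥0∞)^d)⁻¹) * ((2:ℝ≥0∞)^(((m:ℝ)+1)*s) * (2:ℝ≥0∞)^(-1-s)) := by
          ring
      _ = (2:ℝ≥0∞)^((m:ℝ)*s - 1) := by
          rw [ENNReal.mul_inv_cancel hC0 hCt, one_mul, ← ENNReal.rpow_add _ _ h2ne h2top]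
          congr 1; ring
  have key2 : ((3:ℝ≥0∞)^d : ℝ≥0∞) ≤ (2:ℝ≥0∞)^((m:ℝ)*s - 1) := by
    have h1 : (3:ℝ≥0∞)^d * 2 * 2⁻¹ ≤ (2:ℝ≥0∞)^((M:ℝ)*s) * 2⁻¹ :=
      mul_le_mul_left hE4 _
    have h2 : (3:ℝ≥0∞)^d * 2 * 2⁻¹ = (3:ℝ≥0∞)^d := by
      rw [mul_assoc, ENNReal.mul_inv_cancel h2ne h2top, mul_one]
    have h3 : (2:ℝ≥0∞)^((M:ℝ)*s) * 2⁻¹ = (2:ℝ≥0∞)^((M:ℝ)*s - 1) := by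
      have hinv : (2:ℝ≥0∞)⁻¹ = (2:ℝ≥0∞) ^ (-1 : ℝ) := (ENNReal.rpow_neg_one 2).symm
      rw [hinv, ← ENNReal.rpow_add _ _ h2ne h2top, sub_eq_add_neg]
    rw [h2, h3] at h1
    refine le_trans h1 (ENNReal.rpow_le_rpow_of_exponent_le one_le_two ?_)
    have : (M:ℝ) ≤ (m:ℝ) := Nat.cast_le.mpr hm
    nlinarith
  calc (3:ℝ≥0∞)^d * ((2:ℝ≥0∞) ^ (((m:ℝ)+1)*s) * e + 1)
      = (3:ℝ≥0∞)^d * ((2:ℝ≥0∞) ^ (((m:ℝ)+1)*s) * e) + (3:ℝ≥0∞)^d := by ring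
    _ ≤ (2:ℝ≥0∞)^((m:ℝ)*s - 1) + (2:ℝ≥0∞)^((m:ℝ)*s - 1) := add_le_add key1 key2
    _ = (2:ℝ≥0∞)^((m:ℝ)*s) := by
        rw [← two_mul]
        have h21 : (2:ℝ≥0∞) = (2:ℝ≥0∞) ^ (1:ℝ) := (ENNReal.rpow_one 2).symm
        calc (2:ℝ≥0∞) * (2:ℝ≥0∞)^((m:ℝ)*s - 1)
            = (2:ℝ≥0∞) ^ (1:ℝ) * (2:ℝ≥0∞)^((m:ℝ)*s - 1) := by rw [← h21]
          _ = (2:ℝ≥0∞) ^ (1 + ((m:ℝ)*s - 1)) := (ENNReal.rpow_add _ _ h2ne h2top).symm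
          _ = (2:ℝ≥0∞) ^ ((m:ℝ)*s) := by norm_num

end RobustAux

/-- If a probability measure `μ` on `ℝ^d` is `(2^{-m}, s, m^{-2})`-robust for all `m ≥ m₀`,
then every Borel set of positive `μ`-measure has positive `s`-dimensional Hausdorff measure,
hence Hausdorff dimension at least `s`. -/
theorem hausdorff_of_robust {d : ℕ} (μ : Measure (EuclideanSpace ℝ (Fin d)))
    [IsProbabilityMeasure μ] (s : ℝ) (m₀ : ℕ)
    (hrob : ∀ m : ℕ, m₀ ≤ m → IsRobust d μ m s (((m:ℝ) ^ 2)⁻¹)) :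
    ∀ X : Set (EuclideanSpace ℝ (Fin d)), MeasurableSet X → 0 < μ X →
      0 < μH[s] X ∧ ENNReal.ofReal s ≤ dimH X := by
  classical
  have key : ∀ X : Set (EuclideanSpace ℝ (Fin d)), MeasurableSet X → 0 < μ X →
      μH[s] X ≠ 0 := by
    intro X hX hpos h0
    rcases le_or_gt s 0 with hs | hs
    · -- case s ≤ 0
      obtain ⟨x, hx⟩ := nonempty_of_measure_ne_zero hpos.ne'
      obtain ⟨t, hcov, hdiam, hsum⟩ := RobustAux.cover_extract h0
        (ENNReal.ofReal ((2:ℝ) ^ (-(1:ℝ)))) 1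
        (ENNReal.ofReal_pos.mpr (by positivity)) one_pos
      obtain ⟨n, hn⟩ := Set.mem_iUnion.mp (hcov hx)
      have hne : (t n).Nonempty := ⟨x, hn⟩
      have hterm : (1:ℝ≥0∞) ≤ ⨆ _ : (t n).Nonempty, EMetric.diam (t n) ^ s := by
        rw [iSup_pos hne]
        rcases eq_or_lt_of_le hs with hs0 | hsneg
        · rw [hs0, ENNReal.rpow_zero]
        · rcases eq_or_ne (EMetric.diam (t n)) 0 with hdz | hdz
          · rw [hdz, ENNReal.zero_rpow_of_neg hsneg]
            exact le_top
          · refine ENNReal.one_le_rpow_of_pos_of_le_one_of_neg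
              (pos_iff_ne_zero.mpr hdz) ?_ hsneg
            refine le_trans (hdiam n) ?_
            rw [show ((1:ℝ≥0∞)) = ENNReal.ofReal 1 by simp]
            refine ENNReal.ofReal_le_ofReal ?_
            rw [Real.rpow_neg (by norm_num), Real.rpow_one]
            norm_num
      have hge : (1:ℝ≥0∞) ≤ ∑' n, ⨆ _ : (t n).Nonempty, EMetric.diam (t n) ^ s :=
        le_trans hterm (ENNReal.le_tsum n)
      exact lt_irrefl _ (lt_of_le_of_lt hge hsum)
    · -- main case 0 < s
      set C : ℝ≥0∞ := (3:ℝ≥0∞) ^ d with hC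
      have h2ne : (2:ℝ≥0∞) ≠ 0 := by norm_num
      have h2top : (2:ℝ≥0∞) ≠ ⊤ := by norm_num
      have hC0 : C ≠ 0 := pow_ne_zero d (by norm_num)
      have hCt : C ≠ ⊤ := ENNReal.pow_ne_top (by norm_num)
      have hE4ev : ∀ᶠ M : ℕ in atTop, C * 2 ≤ (2:ℝ≥0∞) ^ ((M:ℝ) * s) := by
        filter_upwards [eventually_ge_atTop ⌈(2*(d:ℝ)+1)/s⌉₊] with M hM
        have hMs : 2*(d:ℝ)+1 ≤ (M:ℝ)*s := by
          have h1 : (2*(d:ℝ)+1)/s ≤ (⌈(2*(d:ℝ)+1)/s⌉₊ : ℝ) := Nat.le_ceil _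
          have h2 : ((⌈(2*(d:ℝ)+1)/s⌉₊ : ℕ) : ℝ) ≤ (M:ℝ) := Nat.cast_le.mpr hM
          have h3 := le_trans h1 h2
          rwa [div_le_iff₀ hs] at h3
        have hCle : C * 2 ≤ (2:ℝ≥0∞) ^ (2*(d:ℝ)+1) := by
          have hsplit : (2:ℝ≥0∞) ^ (2*(d:ℝ)+1) = (2:ℝ≥0∞) ^ (2*(d:ℝ)) * 2 := by
            rw [ENNReal.rpow_add _ _ h2ne h2top, ENNReal.rpow_one]
          rw [hsplit]
          refine mul_le_mul_left ?_ 2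
          have hcast : (2:ℝ≥0∞) ^ (2*(d:ℝ)) = ((4:ℝ≥0∞)) ^ d := by
            have hnat : (2*(d:ℝ)) = ((2*d : ℕ) : ℝ) := by push_cast; ring
            rw [hnat, ENNReal.rpow_natCast, pow_mul]
            norm_num
          rw [hC, hcast]
          exact pow_le_pow_left₀ (by norm_num) (by norm_num) d
        exact le_trans hCle (ENNReal.rpow_le_rpow_of_exponent_le one_le_two hMs)
      have htail := RobustAux.tail_small hpos (measure_ne_top μ X)
      obtain ⟨M, hM1, hM2, hM3⟩ := ((eventually_ge_atTop m₀).and (htail.and hE4ev)).exists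
      set ε : ℝ≥0∞ := (2:ℝ≥0∞) ^ (-1-s) * C⁻¹ with hεdef
      have hεpos : 0 < ε :=
        ENNReal.mul_pos (ENNReal.rpow_pos (by norm_num) h2top).ne'
          (ENNReal.inv_ne_zero.mpr hCt)
      obtain ⟨t, hcov, hdiam, hsum⟩ := RobustAux.cover_extract h0
        (ENNReal.ofReal ((2:ℝ) ^ (-(M:ℝ)))) ε (ENNReal.ofReal_pos.mpr (by positivity)) hεpos
      obtain ⟨mf, hmf1, hmf2, hmf3, hmf4⟩ := RobustAux.exists_scale t M hdiam
      set tsel : ℕ → ℕ → Set (EuclideanSpace ℝ (Fin d)) :=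
        fun m n => if mf n = m then t n else ∅ with htsel
      set A : ℕ → Set (Fin d → ℤ) :=
        fun m => {k | (dyadicCube d m k ∩ (X ∩ ⋃ n, tsel m n)).Nonempty} with hA
      set Y : ℕ → Set (EuclideanSpace ℝ (Fin d)) :=
        fun m => ⋃ k ∈ A m, dyadicCube d m k with hYdef
      have hYmeas : ∀ m, MeasurableSet (Y m) := fun m =>
        MeasurableSet.biUnion (A m).to_countable
          (fun k _ => RobustAux.measurableSet_dyadicCube k)
      have hXY : X ⊆ ⋃ j : ℕ, Y (j + M) := by
        intro x hx
        obtain ⟨n, hn⟩ := Set.mem_iUnion.mp (hcov hx)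
        have hxsel : x ∈ X ∩ ⋃ n', tsel (mf n) n' := by
          refine ⟨hx, Set.mem_iUnion.mpr ⟨n, ?_⟩⟩
          have hts : tsel (mf n) n = t n := if_pos rfl
          rw [hts]
          exact hn
        have hxc := RobustAux.mem_dyadicCube_floor (m := mf n) x
        have hkA : (fun i => ⌊x i * (2:ℝ) ^ (mf n)⌋) ∈ A (mf n) := ⟨x, hxc, hxsel⟩
        refine Set.mem_iUnion.mpr ⟨mf n - M, ?_⟩
        have hmM : mf n - M + M = mf n := Nat.sub_add_cancel (hmf1 n)
        rw [hmM]
        exact Set.mem_biUnion hkA hxc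
      have hcount : ∀ m, (cubeCount d m (Y m) : ℝ≥0∞) = ((A m).encard : ℝ≥0∞) := by
        intro m
        have hset : {k : Fin d → ℤ | (dyadicCube d m k ∩ Y m).Nonempty} = A m := by
          ext k
          constructor
          · rintro ⟨x, hxk, hxY⟩
            obtain ⟨k', hk', hxk'⟩ := Set.mem_iUnion₂.mp hxY
            rwa [RobustAux.dyadicCube_eq_of_mem hxk hxk']
          · intro hk
            have hk2 : (dyadicCube d m k ∩ (X ∩ ⋃ n, tsel m n)).Nonempty := hk
            obtain ⟨x, hx⟩ := hk2
            exact ⟨x, hx.1, Set.mem_biUnion hk hx.1⟩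
        have : cubeCount d m (Y m) = (A m).encard := by
          unfold cubeCount
          rw [hset]
        rw [this]
      have hAle : ∀ m, M ≤ m → ((A m).encard : ℝ≥0∞) ≤ (2:ℝ≥0∞) ^ ((m:ℝ) * s) := by
        intro m hm
        set B : ℕ → Set (Fin d → ℤ) :=
          fun n => {k | (dyadicCube d m k ∩ tsel m n).Nonempty} with hB
        have hsubA : A m ⊆ ⋃ n, B n := by
          rintro k ⟨x, hxk, _, hxU⟩
          obtain ⟨n, hn⟩ := Set.mem_iUnion.mp hxU
          exact Set.mem_iUnion.mpr ⟨n, ⟨x, hxk, hn⟩⟩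
        set g1 : ℕ → ℝ≥0∞ := fun n =>
          if mf n = m ∧ EMetric.diam (t n) ≠ 0 then 1 else 0 with hg1
        set g2 : ℕ → ℝ≥0∞ := fun n => if n = m - (M + 1) then 1 else 0 with hg2
        have hBle : ∀ n, ((B n).encard : ℝ≥0∞) ≤ C * (g1 n + g2 n) := by
          intro n
          by_cases hmn : mf n = m
          · have hts : tsel m n = t n := if_pos hmn
            have hd' : EMetric.diam (t n) ≤ ENNReal.ofReal ((2:ℝ) ^ (-(m:ℝ))) := by
              rw [← hmn]; exact hmf2 n
            have hbd : ((B n).encard : ℝ≥0∞) ≤ C := by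
              have hBn : B n = {k : Fin d → ℤ | (dyadicCube d m k ∩ t n).Nonempty} := by
                rw [hB]
                simp only [hts]
              rw [hBn]
              exact RobustAux.encard_hit_le hd'
            by_cases hz : EMetric.diam (t n) = 0
            · have hg2n : g2 n = 1 := by
                rw [hg2]
                simp only
                rw [if_pos]
                have := hmf4 n hz
                omega
              calc ((B n).encard : ℝ≥0∞) ≤ C := hbd
                _ = C * 1 := (mul_one C).symm
                _ ≤ C * (g1 n + g2 n) := by
                    rw [hg2n] at *
                    exact mul_le_mul_right le_add_self C
            · have hg1n : g1 n = 1 := if_pos ⟨hmn, hz⟩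
              calc ((B n).encard : ℝ≥0∞) ≤ C := hbd
                _ = C * 1 := (mul_one C).symm
                _ ≤ C * (g1 n + g2 n) := by
                    rw [hg1n]
                    exact mul_le_mul_right le_self_add C
          · have hts : tsel m n = ∅ := if_neg hmn
            have hBn : B n = ∅ := by
              rw [hB]
              simp [hts]
            rw [hBn]
            simp
        have hg1le : ∀ n, g1 n ≤ (2:ℝ≥0∞) ^ (((m:ℝ)+1)*s) *
            (⨆ _ : (t n).Nonempty, EMetric.diam (t n) ^ s) := by
          intro n
          rw [hg1]
          simp only
          split_ifs with hcond
          · obtain ⟨hmn, hz⟩ := hcond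
            have hne : (t n).Nonempty := by
              rw [Set.nonempty_iff_ne_empty]
              intro he
              exact hz (by rw [he]; exact EMetric.diam_empty)
            rw [iSup_pos hne]
            have hlt : (2:ℝ≥0∞) ^ (-((m:ℝ)+1)) ≤ EMetric.diam (t n) := by
              rw [← RobustAux.T_eq]
              refine le_of_lt ?_
              have hmf3' := hmf3 n hz
              rwa [hmn] at hmf3'
            have hpow : (2:ℝ≥0∞) ^ ((-((m:ℝ)+1))*s) ≤ EMetric.diam (t n) ^ s := by
              rw [ENNReal.rpow_mul]
              exact ENNReal.rpow_le_rpow hlt hs.le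
            calc (1:ℝ≥0∞) = (2:ℝ≥0∞) ^ ((((m:ℝ)+1))*s) * (2:ℝ≥0∞) ^ ((-((m:ℝ)+1))*s) := by
                  rw [← ENNReal.rpow_add _ _ h2ne h2top]
                  have hzero : ((((m:ℝ)+1))*s) + ((-((m:ℝ)+1))*s) = 0 := by ring
                  rw [hzero, ENNReal.rpow_zero]
              _ ≤ (2:ℝ≥0∞) ^ ((((m:ℝ)+1))*s) * EMetric.diam (t n) ^ s :=
                  mul_le_mul_right hpow _
          · exact zero_le
        have hg2sum : ∑' n, g2 n = 1 := tsum_ite_eq (m - (M+1)) (fun _ => (1:ℝ≥0∞))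
        have hg1sum : ∑' n, g1 n ≤ (2:ℝ≥0∞) ^ (((m:ℝ)+1)*s) *
            (∑' n, ⨆ _ : (t n).Nonempty, EMetric.diam (t n) ^ s) := by
          calc ∑' n, g1 n ≤ ∑' n, (2:ℝ≥0∞) ^ (((m:ℝ)+1)*s) *
              (⨆ _ : (t n).Nonempty, EMetric.diam (t n) ^ s) := ENNReal.tsum_le_tsum hg1le
            _ = _ := ENNReal.tsum_mul_left
        calc ((A m).encard : ℝ≥0∞) ≤ (((⋃ n, B n).encard : ℕ∞) : ℝ≥0∞) :=
              ENat.toENNReal_mono (Set.encard_mono hsubA)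
          _ ≤ ∑' n, ((B n).encard : ℝ≥0∞) := RobustAux.encard_toENNReal_iUnion_le B
          _ ≤ ∑' n, C * (g1 n + g2 n) := ENNReal.tsum_le_tsum hBle
          _ = C * ((∑' n, g1 n) + (∑' n, g2 n)) := by
              rw [ENNReal.tsum_mul_left, ENNReal.tsum_add]
          _ ≤ C * ((2:ℝ≥0∞) ^ (((m:ℝ)+1)*s) *
                (∑' n, ⨆ _ : (t n).Nonempty, EMetric.diam (t n) ^ s) + 1) :=
              mul_le_mul_right (add_le_add hg1sum (le_of_eq hg2sum)) C
          _ ≤ (2:ℝ≥0∞) ^ ((m:ℝ)*s) := by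
              refine RobustAux.main_count_bound hs hm hM3 ?_
              exact le_of_lt hsum
      have hYle : ∀ j : ℕ, μ (Y (j + M)) ≤ ENNReal.ofReal ((((j + M : ℕ):ℝ)^2)⁻¹) := by
        intro j
        by_contra hcon
        push_neg at hcon
        have hr := hrob (j + M) (le_trans hM1 (Nat.le_add_left M j)) (Y (j+M)) (hYmeas _) hcon
        rw [RobustAux.T_eq, hcount] at hr
        exact lt_irrefl _ (lt_of_lt_of_le hr (hAle (j+M) (Nat.le_add_left M j)))
      have hfinal : μ X < μ X := by
        calc μ X ≤ μ (⋃ j : ℕ, Y (j + M)) := measure_mono hXY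
          _ ≤ ∑' j, μ (Y (j + M)) := measure_iUnion_le _
          _ ≤ ∑' j, ENNReal.ofReal ((((j + M : ℕ):ℝ)^2)⁻¹) := ENNReal.tsum_le_tsum hYle
          _ < μ X := hM2
      exact lt_irrefl _ hfinal
  intro X hX hpos
  have hne0 := key X hX hpos
  refine ⟨pos_iff_ne_zero.mpr hne0, ?_⟩
  rcases le_or_gt s 0 with hs0 | hs0
  · have hz : ENNReal.ofReal s = 0 := ENNReal.ofReal_eq_zero.mpr hs0
    rw [hz]
    exact zero_le
  · have h1 : μH[((s.toNNReal : ℝ≥0∞).toReal)] X ≠ 0 := by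
      have : ((s.toNNReal : ℝ≥0∞)).toReal = s := by
        rw [ENNReal.coe_toReal, Real.coe_toNNReal s hs0.le]
      rw [this]
      exact hne0
    have h2 := le_dimH_of_hausdorffMeasure_ne_zero (d := s.toNNReal) (by
      simpa using h1)
    have h3 : ENNReal.ofReal s = (s.toNNReal : ℝ≥0∞) := rfl
    rw [h3]
    exact h2
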